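/- The negation-right rule is admissible in cut-free lTS4: if the sequent α, Γ ⊢ Δ is provable in cut-free lTS4, then Γ ⊢ Δ, ¬α is provable in cut-free lTS4. -/

import Mathlib

inductive Fml : Type
  | var : ℕ → Fml
  | and : Fml → Fml → Fml
  | or  : Fml → Fml → Fml
  | imp : Fml → Fml → Fml
  | neg : Fml → Fml
  | box : Fml → Fml
  | dia : Fml → Fml
  deriving DecidableEq

open Fml

abbrev Ctx := Finset Fml

/-- □Γ -/
def boxS (Γ : Ctx) : Ctx := Γ.image Fml.box
/-- ◇Γ -/
def diaS (Γ : Ctx) : Ctx := Γ.image Fml.dia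
/-- ¬□Γ -/
def nboxS (Γ : Ctx) : Ctx := Γ.image (fun g => Fml.neg (Fml.box g))
/-- ¬◇Γ -/
def ndiaS (Γ : Ctx) : Ctx := Γ.image (fun g => Fml.neg (Fml.dia g))

/-- The twist sequent calculus lTS4; the Boolean index is `true` iff the cut rule is allowed.
    `lTS4 false` is the cut-free fragment. -/
inductive lTS4 : Bool → Ctx → Ctx → Prop
  | initV (c : Bool) (p : ℕ) : lTS4 c {var p} {var p}
  | initNV (c : Bool) (p : ℕ) : lTS4 c {neg (var p)} {neg (var p)}
  | initL (c : Bool) (p : ℕ) : lTS4 c {neg (var p), var p} ∅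
  | initR (c : Bool) (p : ℕ) : lTS4 c ∅ {neg (var p), var p}
  | cut (Γ Δ : Ctx) (α : Fml) :
      lTS4 true Γ {α} → lTS4 true (insert α Γ) Δ → lTS4 true Γ Δ
  | weL (c Γ Δ α) : lTS4 c Γ Δ → lTS4 c (insert α Γ) Δ
  | weR (c Γ Δ α) : lTS4 c Γ Δ → lTS4 c Γ (insert α Δ)
  | andL (c Γ Δ α β) : lTS4 c (insert α (insert β Γ)) Δ → lTS4 c (insert (α.and β) Γ) Δ
  | andR (c Γ Δ α β) : lTS4 c Γ (insert α Δ) → lTS4 c Γ (insert β Δ) →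
      lTS4 c Γ (insert (α.and β) Δ)
  | orL (c Γ Δ α β) : lTS4 c (insert α Γ) Δ → lTS4 c (insert β Γ) Δ →
      lTS4 c (insert (α.or β) Γ) Δ
  | orR (c Γ Δ α β) : lTS4 c Γ (insert α (insert β Δ)) → lTS4 c Γ (insert (α.or β) Δ)
  | impL (c Γ Δ α β) : lTS4 c Γ (insert α Δ) → lTS4 c (insert β Γ) Δ →
      lTS4 c (insert (α.imp β) Γ) Δ
  | impR (c Γ Δ α β) : lTS4 c (insert α Γ) (insert β Δ) → lTS4 c Γ (insert (α.imp β) Δ)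
  | boxL (c Γ Δ α) : lTS4 c (insert α Γ) Δ → lTS4 c (insert α.box Γ) Δ
  | boxR (c Γ₁ Γ₂ Δ₁ Δ₂ α) :
      lTS4 c (boxS Γ₁ ∪ ndiaS Γ₂) (insert α (diaS Δ₁ ∪ nboxS Δ₂)) →
      lTS4 c (boxS Γ₁ ∪ ndiaS Γ₂) (insert α.box (diaS Δ₁ ∪ nboxS Δ₂))
  | diaL (c Γ₁ Γ₂ Δ₁ Δ₂ α) :
      lTS4 c (insert α (boxS Γ₁ ∪ ndiaS Γ₂)) (diaS Δ₁ ∪ nboxS Δ₂) →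
      lTS4 c (insert α.dia (boxS Γ₁ ∪ ndiaS Γ₂)) (diaS Δ₁ ∪ nboxS Δ₂)
  | diaR (c Γ Δ α) : lTS4 c Γ (insert α Δ) → lTS4 c Γ (insert α.dia Δ)
  | nnL (c Γ Δ α) : lTS4 c (insert α Γ) Δ → lTS4 c (insert α.neg.neg Γ) Δ
  | nnR (c Γ Δ α) : lTS4 c Γ (insert α Δ) → lTS4 c Γ (insert α.neg.neg Δ)
  | nandL (c Γ Δ α β) : lTS4 c Γ (insert α Δ) → lTS4 c Γ (insert β Δ) →
      lTS4 c (insert (α.and β).neg Γ) Δ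
  | nandR (c Γ Δ α β) : lTS4 c (insert α (insert β Γ)) Δ → lTS4 c Γ (insert (α.and β).neg Δ)
  | norL (c Γ Δ α β) : lTS4 c Γ (insert α (insert β Δ)) → lTS4 c (insert (α.or β).neg Γ) Δ
  | norR (c Γ Δ α β) : lTS4 c (insert α Γ) Δ → lTS4 c (insert β Γ) Δ →
      lTS4 c Γ (insert (α.or β).neg Δ)
  | nimpL (c Γ Δ α β) : lTS4 c (insert α Γ) (insert β Δ) → lTS4 c (insert (α.imp β).neg Γ) Δ
  | nimpR (c Γ Δ α β) : lTS4 c Γ (insert α Δ) → lTS4 c (insert β Γ) Δ →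
      lTS4 c Γ (insert (α.imp β).neg Δ)
  | nboxL (c Γ₁ Γ₂ Δ₁ Δ₂ α) :
      lTS4 c (boxS Γ₁ ∪ ndiaS Γ₂) (insert α (diaS Δ₁ ∪ nboxS Δ₂)) →
      lTS4 c (insert α.box.neg (boxS Γ₁ ∪ ndiaS Γ₂)) (diaS Δ₁ ∪ nboxS Δ₂)
  | nboxR (c Γ Δ α) : lTS4 c (insert α Γ) Δ → lTS4 c Γ (insert α.box.neg Δ)
  | ndiaL (c Γ Δ α) : lTS4 c Γ (insert α Δ) → lTS4 c (insert α.dia.neg Γ) Δ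
  | ndiaR (c Γ₁ Γ₂ Δ₁ Δ₂ α) :
      lTS4 c (insert α (boxS Γ₁ ∪ ndiaS Γ₂)) (diaS Δ₁ ∪ nboxS Δ₂) →
      lTS4 c (boxS Γ₁ ∪ ndiaS Γ₂) (insert α.dia.neg (diaS Δ₁ ∪ nboxS Δ₂))

/-- Flip a formula across the turnstile: strip one negation or add one. -/
def flp : Fml → Fml
  | .neg φ => φ
  | φ => .neg φ

lemma weLs {c Γ Δ} (h : lTS4 c Γ Δ) (T : Ctx) : lTS4 c (Γ ∪ T) Δ := by
  induction T using Finset.induction_on with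
  | empty => simpa using h
  | insert _ _ hx ih =>
      rw [Finset.union_insert]
      exact lTS4.weL _ _ _ _ ih

lemma weRs {c Γ Δ} (h : lTS4 c Γ Δ) (T : Ctx) : lTS4 c Γ (Δ ∪ T) := by
  induction T using Finset.induction_on with
  | empty => simpa using h
  | insert _ _ hx ih =>
      rw [Finset.union_insert]
      exact lTS4.weR _ _ _ _ ih

lemma weaken {c Γ Δ Γ' Δ'} (h : lTS4 c Γ Δ) (h1 : Γ ⊆ Γ') (h2 : Δ ⊆ Δ') :
    lTS4 c Γ' Δ' := by
  have := weRs (weLs h Γ') Δ'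
  rwa [Finset.union_eq_right.mpr h1, Finset.union_eq_right.mpr h2] at this

lemma absorb {c Γ Δ a} (h : lTS4 c Γ (insert a Δ)) (ha : a ∈ Δ) : lTS4 c Γ Δ := by
  rwa [Finset.insert_eq_self.mpr ha] at h

/-- Turn `flp a` on the right into `¬a` on the right. -/
lemma negR_of_flip {Γ Δ a} (h : lTS4 false Γ (insert (flp a) Δ)) :
    lTS4 false Γ (insert (Fml.neg a) Δ) := by
  cases a with
  | neg b => exact lTS4.nnR _ _ _ _ h
  | var p => exact h
  | and x y => exact h
  | or x y => exact h
  | imp x y => exact h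
  | box x => exact h
  | dia x => exact h
lemma fS_insert (a : Fml) (S : Ctx) :
    (insert a S).image flp = insert (flp a) (S.image flp) := Finset.image_insert _ _ _

lemma sdiff_insert_sub (a : Fml) (T S : Ctx) : (insert a T) \ S ⊆ insert a (T \ S) := by
  intro x hx
  simp only [Finset.mem_sdiff, Finset.mem_insert] at hx ⊢
  tauto

lemma sdiff_insert_mem {a : Fml} {S : Ctx} (T : Ctx) (ha : a ∈ S) :
    (insert a T) \ S = T \ S := by
  ext x
  simp only [Finset.mem_sdiff, Finset.mem_insert]
  constructor
  · rintro ⟨h | h, h2⟩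
    · exact absurd (h ▸ ha) h2
    · exact ⟨h, h2⟩
  · tauto

lemma sdiff_insert_not_mem {a : Fml} {S : Ctx} (T : Ctx) (ha : a ∉ S) :
    (insert a T) \ S = insert a (T \ S) := by
  ext x
  simp only [Finset.mem_sdiff, Finset.mem_insert]
  constructor
  · tauto
  · rintro (rfl | h)
    · exact ⟨Or.inl rfl, ha⟩
    · tauto

/-- Left restricted context minus a set keeps its shape. -/
lemma ctxL (Γ₁ Γ₂ S : Ctx) :
    (boxS Γ₁ ∪ ndiaS Γ₂) \ S =
      boxS (Γ₁.filter (fun g => Fml.box g ∉ S)) ∪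
      ndiaS (Γ₂.filter (fun g => Fml.neg (Fml.dia g) ∉ S)) := by
  ext x
  simp only [Finset.mem_sdiff, Finset.mem_union, boxS, ndiaS, Finset.mem_image,
    Finset.mem_filter]
  constructor
  · rintro ⟨h | h, h2⟩
    · obtain ⟨g, hg, rfl⟩ := h
      exact Or.inl ⟨g, ⟨hg, h2⟩, rfl⟩
    · obtain ⟨g, hg, rfl⟩ := h
      exact Or.inr ⟨g, ⟨hg, h2⟩, rfl⟩
  · rintro (⟨g, ⟨hg, hgs⟩, rfl⟩ | ⟨g, ⟨hg, hgs⟩, rfl⟩)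
    · exact ⟨Or.inl ⟨g, hg, rfl⟩, hgs⟩
    · exact ⟨Or.inr ⟨g, hg, rfl⟩, hgs⟩

/-- Flips of a subset of a left restricted context form a right restricted context. -/
lemma ctxR {Γ₁ Γ₂ S : Ctx} (hS : S ⊆ boxS Γ₁ ∪ ndiaS Γ₂) :
    S.image flp =
      diaS (Γ₂.filter (fun g => Fml.neg (Fml.dia g) ∈ S)) ∪
      nboxS (Γ₁.filter (fun g => Fml.box g ∈ S)) := by
  ext x
  simp only [Finset.mem_union, diaS, nboxS, Finset.mem_image, Finset.mem_filter]
  constructor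
  · rintro ⟨s, hs, rfl⟩
    have := hS hs
    simp only [Finset.mem_union, boxS, ndiaS, Finset.mem_image] at this
    rcases this with ⟨g, hg, rfl⟩ | ⟨g, hg, rfl⟩
    · exact Or.inr ⟨g, ⟨hg, hs⟩, rfl⟩
    · exact Or.inl ⟨g, ⟨hg, hs⟩, rfl⟩
  · rintro (⟨g, ⟨hg, hgs⟩, rfl⟩ | ⟨g, ⟨hg, hgs⟩, rfl⟩)
    · exact ⟨_, hgs, rfl⟩
    · exact ⟨_, hgs, rfl⟩

lemma dia_not_mem (α : Fml) (Γ₁ Γ₂ : Ctx) : Fml.dia α ∉ boxS Γ₁ ∪ ndiaS Γ₂ := by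
  simp [boxS, ndiaS]

lemma nbox_not_mem (α : Fml) (Γ₁ Γ₂ : Ctx) :
    Fml.neg (Fml.box α) ∉ boxS Γ₁ ∪ ndiaS Γ₂ := by
  simp [boxS, ndiaS]
lemma sdiff_insert_sub2 (a b : Fml) (T S : Ctx) :
    (insert a (insert b T)) \ S ⊆ insert a (insert b (T \ S)) :=
  (sdiff_insert_sub _ _ _).trans (Finset.insert_subset_insert _ (sdiff_insert_sub _ _ _))

lemma ctxR' {Γ₁ Γ₂ S : Ctx} (hS : S ⊆ boxS Γ₁ ∪ ndiaS Γ₂) (Δ₁ Δ₂ : Ctx) :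
    (diaS Δ₁ ∪ nboxS Δ₂) ∪ S.image flp =
      diaS (Δ₁ ∪ Γ₂.filter (fun g => Fml.neg (Fml.dia g) ∈ S)) ∪
      nboxS (Δ₂ ∪ Γ₁.filter (fun g => Fml.box g ∈ S)) := by
  rw [ctxR hS]
  simp only [diaS, nboxS, Finset.image_union]
  ext x
  simp only [Finset.mem_union]
  tauto

lemma ihGen {Γp Δp : Ctx} (ih : ∀ S ⊆ Γp, lTS4 false (Γp \ S) (Δp ∪ S.image flp))
    (S : Ctx) : lTS4 false (Γp \ S) (Δp ∪ S.image flp) := by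
  refine weaken (ih (S ∩ Γp) Finset.inter_subset_right) ?_
    (Finset.union_subset_union_right (Finset.image_subset_image Finset.inter_subset_left))
  intro x hx
  simp only [Finset.mem_sdiff, Finset.mem_inter] at hx ⊢
  tauto

lemma erase_subset_of_subset_insert {p : Fml} {S L : Ctx} (hS : S ⊆ insert p L) :
    S.erase p ⊆ L := by
  intro x hx
  rcases Finset.mem_insert.mp (hS (Finset.mem_of_mem_erase hx)) with rfl | h
  · exact absurd rfl (Finset.ne_of_mem_erase hx)
  · exact h

lemma sdiff_erase_eq {p : Fml} {S L : Ctx} (hpl : p ∉ L) :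
    L \ S = L \ S.erase p := by
  ext x
  simp only [Finset.mem_sdiff, Finset.mem_erase]
  constructor
  · rintro ⟨h1, h2⟩; exact ⟨h1, fun h => h2 h.2⟩
  · rintro ⟨h1, h2⟩; exact ⟨h1, fun h => h2 ⟨fun e => hpl (e ▸ h1), h⟩⟩

lemma fS_erase {p : Fml} {S : Ctx} (hp : p ∈ S) :
    S.image flp = insert (flp p) ((S.erase p).image flp) := by
  conv_lhs => rw [← Finset.insert_erase hp]
  exact fS_insert _ _

theorem main {c : Bool} {Γ Δ : Ctx} (h : lTS4 c Γ Δ) :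
    c = false → ∀ S, S ⊆ Γ → lTS4 false (Γ \ S) (Δ ∪ S.image flp) := by
  induction h with
  | cut Γ Δ α h1 h2 ih1 ih2 => intro hc; simp at hc
  | initV c p =>
      intro _ S hS
      by_cases hv : Fml.var p ∈ S
      · refine weaken (lTS4.initR false p) (by simp) ?_
        intro x hx
        simp only [Finset.mem_insert, Finset.mem_singleton] at hx
        rcases hx with rfl | rfl
        · exact Finset.mem_union_right _ (Finset.mem_image_of_mem _ hv)
        · exact Finset.mem_union_left _ (Finset.mem_singleton_self _)
      · refine weaken (lTS4.initV false p) ?_ Finset.subset_union_left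
        intro x hx
        rw [Finset.mem_singleton] at hx
        subst hx
        exact Finset.mem_sdiff.mpr ⟨Finset.mem_singleton_self _, hv⟩
  | initNV c p =>
      intro _ S hS
      by_cases hv : Fml.neg (Fml.var p) ∈ S
      · refine weaken (lTS4.initR false p) (by simp) ?_
        intro x hx
        simp only [Finset.mem_insert, Finset.mem_singleton] at hx
        rcases hx with rfl | rfl
        · exact Finset.mem_union_left _ (Finset.mem_singleton_self _)
        · exact Finset.mem_union_right _ (Finset.mem_image_of_mem _ hv)
      · refine weaken (lTS4.initNV false p) ?_ Finset.subset_union_left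
        intro x hx
        rw [Finset.mem_singleton] at hx
        subst hx
        exact Finset.mem_sdiff.mpr ⟨Finset.mem_singleton_self _, hv⟩
  | initL c p =>
      intro _ S hS
      by_cases h1 : Fml.neg (Fml.var p) ∈ S <;> by_cases h2 : Fml.var p ∈ S
      · refine weaken (lTS4.initR false p) (by simp) ?_
        intro x hx
        simp only [Finset.mem_insert, Finset.mem_singleton] at hx
        rcases hx with rfl | rfl
        · exact Finset.mem_union_right _ (Finset.mem_image_of_mem _ h2)
        · exact Finset.mem_union_right _ (Finset.mem_image_of_mem _ h1)
      · refine weaken (lTS4.initV false p) ?_ ?_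
        · intro x hx
          rw [Finset.mem_singleton] at hx
          subst hx
          exact Finset.mem_sdiff.mpr ⟨by simp, h2⟩
        · intro x hx
          rw [Finset.mem_singleton] at hx
          subst hx
          exact Finset.mem_union_right _ (Finset.mem_image_of_mem _ h1)
      · refine weaken (lTS4.initNV false p) ?_ ?_
        · intro x hx
          rw [Finset.mem_singleton] at hx
          subst hx
          exact Finset.mem_sdiff.mpr ⟨by simp, h1⟩
        · intro x hx
          rw [Finset.mem_singleton] at hx
          subst hx
          exact Finset.mem_union_right _ (Finset.mem_image_of_mem _ h2)
      · refine weaken (lTS4.initL false p) ?_ (by simp)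
        intro x hx
        simp only [Finset.mem_insert, Finset.mem_singleton] at hx
        rcases hx with rfl | rfl
        · exact Finset.mem_sdiff.mpr ⟨by simp, h1⟩
        · exact Finset.mem_sdiff.mpr ⟨by simp, h2⟩
  | initR c p =>
      intro _ S hS
      refine weaken (lTS4.initR false p) (by simp) Finset.subset_union_left
  | weL c Γ Δ α h ih =>
      rintro rfl S hS
      exact weaken (ihGen (ih rfl) S)
        (Finset.sdiff_subset_sdiff (Finset.subset_insert _ _) (Finset.Subset.refl _))
        (Finset.Subset.refl _)
  | weR c Γ Δ α h ih =>
      rintro rfl S hS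
      refine weaken (ihGen (ih rfl) S) (Finset.Subset.refl _) ?_
      rw [Finset.insert_union]
      exact Finset.subset_insert _ _
  | andL c Γ Δ α β h ih =>
      rintro rfl S hS
      have i := weaken (ihGen (ih rfl) S) (sdiff_insert_sub2 α β Γ S) (Finset.Subset.refl _)
      by_cases hp : Fml.and α β ∈ S
      · rw [sdiff_insert_mem _ hp]
        exact absorb (lTS4.nandR false _ _ α β i)
          (Finset.mem_union_right _ (Finset.mem_image_of_mem _ hp))
      · rw [sdiff_insert_not_mem _ hp]
        exact lTS4.andL false _ _ α β i
  | andR c Γ Δ α β h1 h2 ih1 ih2 =>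
      rintro rfl S hS
      have i1 := ihGen (ih1 rfl) S
      have i2 := ihGen (ih2 rfl) S
      rw [Finset.insert_union] at i1 i2
      rw [Finset.insert_union]
      exact lTS4.andR false _ _ α β i1 i2
  | orL c Γ Δ α β h1 h2 ih1 ih2 =>
      rintro rfl S hS
      have i1 := weaken (ihGen (ih1 rfl) S) (sdiff_insert_sub α Γ S) (Finset.Subset.refl _)
      have i2 := weaken (ihGen (ih2 rfl) S) (sdiff_insert_sub β Γ S) (Finset.Subset.refl _)
      by_cases hp : Fml.or α β ∈ S
      · rw [sdiff_insert_mem _ hp]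
        exact absorb (lTS4.norR false _ _ α β i1 i2)
          (Finset.mem_union_right _ (Finset.mem_image_of_mem _ hp))
      · rw [sdiff_insert_not_mem _ hp]
        exact lTS4.orL false _ _ α β i1 i2
  | orR c Γ Δ α β h ih =>
      rintro rfl S hS
      have i := ihGen (ih rfl) S
      rw [Finset.insert_union, Finset.insert_union] at i
      rw [Finset.insert_union]
      exact lTS4.orR false _ _ α β i
  | impL c Γ Δ α β h1 h2 ih1 ih2 =>
      rintro rfl S hS
      have i1 := ihGen (ih1 rfl) S
      rw [Finset.insert_union] at i1
      have i2 := weaken (ihGen (ih2 rfl) S) (sdiff_insert_sub β Γ S) (Finset.Subset.refl _)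
      by_cases hp : Fml.imp α β ∈ S
      · rw [sdiff_insert_mem _ hp]
        exact absorb (lTS4.nimpR false _ _ α β i1 i2)
          (Finset.mem_union_right _ (Finset.mem_image_of_mem _ hp))
      · rw [sdiff_insert_not_mem _ hp]
        exact lTS4.impL false _ _ α β i1 i2
  | impR c Γ Δ α β h ih =>
      rintro rfl S hS
      have i := weaken (ihGen (ih rfl) S) (sdiff_insert_sub α Γ S) (Finset.Subset.refl _)
      rw [Finset.insert_union] at i
      rw [Finset.insert_union]
      exact lTS4.impR false _ _ α β i
  | boxL c Γ Δ α h ih =>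
      rintro rfl S hS
      have i := weaken (ihGen (ih rfl) S) (sdiff_insert_sub α Γ S) (Finset.Subset.refl _)
      by_cases hp : Fml.box α ∈ S
      · rw [sdiff_insert_mem _ hp]
        exact absorb (lTS4.nboxR false _ _ α i)
          (Finset.mem_union_right _ (Finset.mem_image_of_mem _ hp))
      · rw [sdiff_insert_not_mem _ hp]
        exact lTS4.boxL false _ _ α i
  | boxR c Γ₁ Γ₂ Δ₁ Δ₂ α h ih =>
      rintro rfl S hS
      have i := ihGen (ih rfl) S
      rw [Finset.insert_union, ctxL Γ₁ Γ₂ S, ctxR' hS Δ₁ Δ₂] at i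
      rw [Finset.insert_union, ctxL Γ₁ Γ₂ S, ctxR' hS Δ₁ Δ₂]
      exact lTS4.boxR false _ _ _ _ α i
  | diaL c Γ₁ Γ₂ Δ₁ Δ₂ α h ih =>
      rintro rfl S hS
      by_cases hp : Fml.dia α ∈ S
      · have hpl := dia_not_mem α Γ₁ Γ₂
        have hS' : S.erase (Fml.dia α) ⊆ boxS Γ₁ ∪ ndiaS Γ₂ := erase_subset_of_subset_insert hS
        rw [sdiff_insert_mem _ hp, sdiff_erase_eq hpl,
          show (diaS Δ₁ ∪ nboxS Δ₂) ∪ S.image flp =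
            insert (Fml.neg (Fml.dia α))
              ((diaS Δ₁ ∪ nboxS Δ₂) ∪ (S.erase (Fml.dia α)).image flp) from by
            rw [fS_erase hp, Finset.union_insert]; rfl]
        by_cases hα : α ∈ S.erase (Fml.dia α)
        · have i := ihGen (ih rfl) (S.erase (Fml.dia α))
          rw [sdiff_insert_mem _ hα] at i
          exact lTS4.weR false _ _ _ i
        · have i := ihGen (ih rfl) (S.erase (Fml.dia α))
          rw [sdiff_insert_not_mem _ hα, ctxL Γ₁ Γ₂ _, ctxR' hS' Δ₁ Δ₂] at i
          rw [ctxL Γ₁ Γ₂ _, ctxR' hS' Δ₁ Δ₂]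
          exact lTS4.ndiaR false _ _ _ _ α i
      · have hSL : S ⊆ boxS Γ₁ ∪ ndiaS Γ₂ := by
          intro x hx
          rcases Finset.mem_insert.mp (hS hx) with rfl | hh
          · exact absurd hx hp
          · exact hh
        have i := ihGen (ih rfl) S
        rw [sdiff_insert_not_mem _ hp]
        by_cases hα : α ∈ S
        · rw [sdiff_insert_mem _ hα] at i
          exact weaken i (Finset.subset_insert _ _) (Finset.Subset.refl _)
        · rw [sdiff_insert_not_mem _ hα, ctxL Γ₁ Γ₂ S, ctxR' hSL Δ₁ Δ₂] at i
          rw [ctxL Γ₁ Γ₂ S, ctxR' hSL Δ₁ Δ₂]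
          exact lTS4.diaL false _ _ _ _ α i
  | diaR c Γ Δ α h ih =>
      rintro rfl S hS
      have i := ihGen (ih rfl) S
      rw [Finset.insert_union] at i
      rw [Finset.insert_union]
      exact lTS4.diaR false _ _ α i
  | nnL c Γ Δ α h ih =>
      rintro rfl S hS
      by_cases hp : Fml.neg (Fml.neg α) ∈ S
      · rw [sdiff_insert_mem _ hp]
        have i := ihGen (ih rfl) (insert α S)
        rw [fS_insert, Finset.union_insert] at i
        have i2 : lTS4 false (Γ \ S) (insert (flp α) (Δ ∪ S.image flp)) := by
          refine weaken i ?_ (Finset.Subset.refl _)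
          intro x hx
          simp only [Finset.mem_sdiff, Finset.mem_insert] at hx ⊢
          tauto
        exact absorb (negR_of_flip i2)
          (Finset.mem_union_right _ (Finset.mem_image_of_mem _ hp))
      · have i := weaken (ihGen (ih rfl) S) (sdiff_insert_sub α Γ S) (Finset.Subset.refl _)
        rw [sdiff_insert_not_mem _ hp]
        exact lTS4.nnL false _ _ α i
  | nnR c Γ Δ α h ih =>
      rintro rfl S hS
      have i := ihGen (ih rfl) S
      rw [Finset.insert_union] at i
      rw [Finset.insert_union]
      exact lTS4.nnR false _ _ α i
  | nandL c Γ Δ α β h1 h2 ih1 ih2 =>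
      rintro rfl S hS
      have i1 := ihGen (ih1 rfl) S
      have i2 := ihGen (ih2 rfl) S
      rw [Finset.insert_union] at i1 i2
      by_cases hp : Fml.neg (Fml.and α β) ∈ S
      · rw [sdiff_insert_mem _ hp]
        exact absorb (lTS4.andR false _ _ α β i1 i2)
          (Finset.mem_union_right _ (Finset.mem_image_of_mem _ hp))
      · rw [sdiff_insert_not_mem _ hp]
        exact lTS4.nandL false _ _ α β i1 i2
  | nandR c Γ Δ α β h ih =>
      rintro rfl S hS
      have i := weaken (ihGen (ih rfl) S) (sdiff_insert_sub2 α β Γ S) (Finset.Subset.refl _)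
      rw [Finset.insert_union]
      exact lTS4.nandR false _ _ α β i
  | norL c Γ Δ α β h ih =>
      rintro rfl S hS
      have i := ihGen (ih rfl) S
      rw [Finset.insert_union, Finset.insert_union] at i
      by_cases hp : Fml.neg (Fml.or α β) ∈ S
      · rw [sdiff_insert_mem _ hp]
        exact absorb (lTS4.orR false _ _ α β i)
          (Finset.mem_union_right _ (Finset.mem_image_of_mem _ hp))
      · rw [sdiff_insert_not_mem _ hp]
        exact lTS4.norL false _ _ α β i
  | norR c Γ Δ α β h1 h2 ih1 ih2 =>
      rintro rfl S hS
      have i1 := weaken (ihGen (ih1 rfl) S) (sdiff_insert_sub α Γ S) (Finset.Subset.refl _)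
      have i2 := weaken (ihGen (ih2 rfl) S) (sdiff_insert_sub β Γ S) (Finset.Subset.refl _)
      rw [Finset.insert_union]
      exact lTS4.norR false _ _ α β i1 i2
  | nimpL c Γ Δ α β h ih =>
      rintro rfl S hS
      have i := weaken (ihGen (ih rfl) S) (sdiff_insert_sub α Γ S) (Finset.Subset.refl _)
      rw [Finset.insert_union] at i
      by_cases hp : Fml.neg (Fml.imp α β) ∈ S
      · rw [sdiff_insert_mem _ hp]
        exact absorb (lTS4.impR false _ _ α β i)
          (Finset.mem_union_right _ (Finset.mem_image_of_mem _ hp))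
      · rw [sdiff_insert_not_mem _ hp]
        exact lTS4.nimpL false _ _ α β i
  | nimpR c Γ Δ α β h1 h2 ih1 ih2 =>
      rintro rfl S hS
      have i1 := ihGen (ih1 rfl) S
      rw [Finset.insert_union] at i1
      have i2 := weaken (ihGen (ih2 rfl) S) (sdiff_insert_sub β Γ S) (Finset.Subset.refl _)
      rw [Finset.insert_union]
      exact lTS4.nimpR false _ _ α β i1 i2
  | nboxL c Γ₁ Γ₂ Δ₁ Δ₂ α h ih =>
      rintro rfl S hS
      by_cases hp : Fml.neg (Fml.box α) ∈ S
      · have hpl := nbox_not_mem α Γ₁ Γ₂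
        have hS' : S.erase (Fml.neg (Fml.box α)) ⊆ boxS Γ₁ ∪ ndiaS Γ₂ :=
          erase_subset_of_subset_insert hS
        have i := ihGen (ih rfl) (S.erase (Fml.neg (Fml.box α)))
        rw [Finset.insert_union, ctxL Γ₁ Γ₂ _, ctxR' hS' Δ₁ Δ₂] at i
        rw [sdiff_insert_mem _ hp, sdiff_erase_eq hpl,
          show (diaS Δ₁ ∪ nboxS Δ₂) ∪ S.image flp =
            insert (Fml.box α)
              ((diaS Δ₁ ∪ nboxS Δ₂) ∪ (S.erase (Fml.neg (Fml.box α))).image flp) from by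
            rw [fS_erase hp, Finset.union_insert]; rfl,
          ctxL Γ₁ Γ₂ _, ctxR' hS' Δ₁ Δ₂]
        exact lTS4.boxR false _ _ _ _ α i
      · have hSL : S ⊆ boxS Γ₁ ∪ ndiaS Γ₂ := by
          intro x hx
          rcases Finset.mem_insert.mp (hS hx) with rfl | hh
          · exact absurd hx hp
          · exact hh
        have i := ihGen (ih rfl) S
        rw [Finset.insert_union, ctxL Γ₁ Γ₂ S, ctxR' hSL Δ₁ Δ₂] at i
        rw [sdiff_insert_not_mem _ hp, ctxL Γ₁ Γ₂ S, ctxR' hSL Δ₁ Δ₂]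
        exact lTS4.nboxL false _ _ _ _ α i
  | nboxR c Γ Δ α h ih =>
      rintro rfl S hS
      have i := weaken (ihGen (ih rfl) S) (sdiff_insert_sub α Γ S) (Finset.Subset.refl _)
      rw [Finset.insert_union]
      exact lTS4.nboxR false _ _ α i
  | ndiaL c Γ Δ α h ih =>
      rintro rfl S hS
      have i := ihGen (ih rfl) S
      rw [Finset.insert_union] at i
      by_cases hp : Fml.neg (Fml.dia α) ∈ S
      · rw [sdiff_insert_mem _ hp]
        exact absorb (lTS4.diaR false _ _ α i)
          (Finset.mem_union_right _ (Finset.mem_image_of_mem _ hp))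
      · rw [sdiff_insert_not_mem _ hp]
        exact lTS4.ndiaL false _ _ α i
  | ndiaR c Γ₁ Γ₂ Δ₁ Δ₂ α h ih =>
      rintro rfl S hS
      have i := ihGen (ih rfl) S
      rw [Finset.insert_union]
      by_cases hα : α ∈ S
      · rw [sdiff_insert_mem _ hα] at i
        exact lTS4.weR false _ _ _ i
      · rw [sdiff_insert_not_mem _ hα, ctxL Γ₁ Γ₂ S, ctxR' hS Δ₁ Δ₂] at i
        rw [ctxL Γ₁ Γ₂ S, ctxR' hS Δ₁ Δ₂]
        exact lTS4.ndiaR false _ _ _ _ α i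
/-- (¬right) is admissible in cut-free lTS4. -/
theorem stmt4 (Γ Δ : Ctx) (α : Fml) (h : lTS4 false (insert α Γ) Δ) :
    lTS4 false Γ (insert α.neg Δ) := by
  by_cases hα : α ∈ Γ
  · rw [Finset.insert_eq_self.mpr hα] at h
    exact lTS4.weR false Γ Δ α.neg h
  · have m := main h rfl {α} (Finset.singleton_subset_iff.mpr (Finset.mem_insert_self _ _))
    have e1 : (insert α Γ) \ {α} = Γ := by
      ext x
      simp only [Finset.mem_sdiff, Finset.mem_insert, Finset.mem_singleton]
      constructor
      · rintro ⟨rfl | h1, h2⟩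
        · exact absurd rfl h2
        · exact h1
      · intro hx
        exact ⟨Or.inr hx, fun e => hα (e ▸ hx)⟩
    have e2 : Δ ∪ Finset.image flp {α} = insert (flp α) Δ := by
      ext x
      simp [Finset.mem_union, or_comm]
    rw [e1, e2] at m
    exact negR_of_flip m
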